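/- Let k ⊆ K be fields and let V be a K⊗ₖK-module of rank n (i.e., both the left and right K-dimensions equal n), with simultaneous basis y₁,…,yₙ. Let A ∈ Mₙ(F) be the matrix of additive functions representing right multiplication in the left basis (yᵢα = Σⱼ aᵢⱼ(α)yⱼ) and B ∈ Mₙ(F) the matrix representing left multiplication in the right basis (δyᵢ = Σⱼ yⱼbⱼᵢ(δ)). Then Aᵀ and B are inverse to each other in the ring Mₙ(F), where F is the ring of additive functions K → K under composition and pointwise addition. -/

import Mathlib

open TensorProduct

/-- Let `k ⊆ K` be fields and `V` a `K ⊗ₖ K`-module of rank `n` (it has a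
subset `{y₁,…,yₙ}` which is simultaneously a left and a right `K`-basis; here the left
action is `a • v = (a ⊗ 1) • v` and the right action is `v • b = (1 ⊗ b) • v`, and the
basis property is expressed by unique representability).  Let `F = AddMonoid.End K` be the
ring of additive functions `K → K` (pointwise addition, composition), let
`A ∈ Mₙ(F)` represent right multiplication in the left basis (`yᵢ α = Σⱼ aᵢⱼ(α) yⱼ`), and
let `B ∈ Mₙ(F)` represent left multiplication in the right basis (`δ yᵢ = Σⱼ yⱼ bⱼᵢ(δ)`).
Then `Aᵀ` and `B` are mutually inverse in the matrix ring `Mₙ(F)`. -/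
theorem stmt9 (k K : Type*) [Field k] [Field K] [Algebra k K]
    (V : Type*) [AddCommGroup V] [Module (K ⊗[k] K) V]
    (n : ℕ) (y : Fin n → V)
    (hleft : ∀ v : V, ∃! c : Fin n → K, v = ∑ i, (c i ⊗ₜ[k] (1 : K)) • y i)
    (hright : ∀ v : V, ∃! c : Fin n → K, v = ∑ i, ((1 : K) ⊗ₜ[k] c i) • y i)
    (A B : Matrix (Fin n) (Fin n) (AddMonoid.End K))
    (hA : ∀ (i : Fin n) (α : K),
      ((1 : K) ⊗ₜ[k] α) • y i = ∑ j, ((A i j α) ⊗ₜ[k] (1 : K)) • y j)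
    (hB : ∀ (i : Fin n) (δ : K),
      (δ ⊗ₜ[k] (1 : K)) • y i = ∑ j, ((1 : K) ⊗ₜ[k] (B j i δ)) • y j) :
    A.transpose * B = 1 ∧ B * A.transpose = 1 := by
  -- uniqueness of left coefficients
  have luniq : ∀ c d : Fin n → K,
      (∑ i, (c i ⊗ₜ[k] (1 : K)) • y i) = (∑ i, (d i ⊗ₜ[k] (1 : K)) • y i) → c = d := by
    intro c d h
    obtain ⟨e, -, he⟩ := hleft (∑ i, (c i ⊗ₜ[k] (1 : K)) • y i)
    exact (he c rfl).trans (he d h).symm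
  have runiq : ∀ c d : Fin n → K,
      (∑ i, ((1 : K) ⊗ₜ[k] c i) • y i) = (∑ i, ((1 : K) ⊗ₜ[k] d i) • y i) → c = d := by
    intro c d h
    obtain ⟨e, -, he⟩ := hright (∑ i, ((1 : K) ⊗ₜ[k] c i) • y i)
    exact (he c rfl).trans (he d h).symm
  constructor
  · ext j i
    rename_i δ
    have key : (fun m => ∑ l, A l m (B l i δ)) = (fun m => if m = i then δ else 0) := by
      apply luniq
      calc ∑ m, ((∑ l, A l m (B l i δ)) ⊗ₜ[k] (1 : K)) • y m
          = ∑ m, ∑ l, ((A l m (B l i δ)) ⊗ₜ[k] (1 : K)) • y m := by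
            simp [TensorProduct.sum_tmul, Finset.sum_smul]
        _ = ∑ l, ∑ m, ((A l m (B l i δ)) ⊗ₜ[k] (1 : K)) • y m := Finset.sum_comm
        _ = ∑ l, ((1 : K) ⊗ₜ[k] (B l i δ)) • y l := by
            refine Finset.sum_congr rfl fun l _ => ?_
            rw [← hA]
        _ = (δ ⊗ₜ[k] (1 : K)) • y i := (hB i δ).symm
        _ = ∑ m, ((if m = i then δ else 0) ⊗ₜ[k] (1 : K)) • y m := by
            symm
            rw [Finset.sum_eq_single i]
            · simp
            · intro m _ hm; simp [hm]
            · simp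
    have := congrFun key j
    simp only [Matrix.mul_apply, Matrix.transpose_apply, Matrix.one_apply]
    rw [show (∑ l, A l j * B l i) δ = ∑ l, (A l j * B l i) δ from AddMonoidHom.finset_sum_apply _ _ _]
    have h2 : ∀ l, (A l j * B l i) δ = A l j (B l i δ) := fun l => rfl
    simp only [h2]
    rw [this]
    split <;> rfl
  · ext i j
    rename_i α
    have key : (fun m => ∑ l, B m l (A j l α)) = (fun m => if m = j then α else 0) := by
      apply runiq
      calc ∑ m, ((1 : K) ⊗ₜ[k] (∑ l, B m l (A j l α))) • y m
          = ∑ m, ∑ l, ((1 : K) ⊗ₜ[k] (B m l (A j l α))) • y m := by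
            simp [TensorProduct.tmul_sum, Finset.sum_smul]
        _ = ∑ l, ∑ m, ((1 : K) ⊗ₜ[k] (B m l (A j l α))) • y m := Finset.sum_comm
        _ = ∑ l, ((A j l α) ⊗ₜ[k] (1 : K)) • y l := by
            refine Finset.sum_congr rfl fun l _ => ?_
            rw [← hB]
        _ = ((1 : K) ⊗ₜ[k] α) • y j := (hA j α).symm
        _ = ∑ m, ((1 : K) ⊗ₜ[k] (if m = j then α else 0)) • y m := by
            symm
            rw [Finset.sum_eq_single j]
            · simp
            · intro m _ hm; simp [hm]
            · simp
    have := congrFun key i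
    simp only [Matrix.mul_apply, Matrix.transpose_apply, Matrix.one_apply]
    rw [show (∑ l, B i l * A j l) α = ∑ l, (B i l * A j l) α from AddMonoidHom.finset_sum_apply _ _ _]
    have h2 : ∀ l, (B i l * A j l) α = B i l (A j l α) := fun l => rfl
    simp only [h2]
    rw [this]
    split <;> rfl
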